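/- Let μ be a Borel measure on (0,∞), let ξ : (0,∞) → ℝ be measurable, let a ∈ [0,1] and η ∈ ℝ. Then for every s ≥ 0, ∫_{(0,∞)} (1 − e^{−xs})·|ξ(x)| dμ(x) ≤ s^a · (∫_{(0,∞)} ξ(x)²·(1+x)^η dμ(x))^{1/2} · (∫_{(0,∞)} (1+x)^{2a−η} dμ(x))^{1/2}. In particular, if both integrals on the right are finite, the function g(s) = ∫ e^{−xs} ξ(x) dμ(x) satisfies the Hölder-type bound |g(s) − g(0)| ≤ C·s^a at the origin. -/

import Mathlib

open Real MeasureTheory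

private lemma one_sub_exp_le_rpow {u a : ℝ} (hu : 0 ≤ u) (ha0 : 0 ≤ a) (ha1 : a ≤ 1) :
    1 - Real.exp (-u) ≤ u ^ a := by
  rcases eq_or_lt_of_le hu with h | h
  · simp [← h]
    positivity
  rcases le_or_gt u 1 with h1 | h1
  · calc 1 - Real.exp (-u) ≤ u := by
          have := Real.add_one_le_exp (-u); linarith
      _ = u ^ (1 : ℝ) := (Real.rpow_one u).symm
      _ ≤ u ^ a := Real.rpow_le_rpow_of_exponent_ge h h1 ha1
  · calc 1 - Real.exp (-u) ≤ 1 := by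
          have := Real.exp_pos (-u); linarith
      _ = u ^ (0 : ℝ) := (Real.rpow_zero u).symm
      _ ≤ u ^ a := Real.rpow_le_rpow_of_exponent_le h1.le ha0

private lemma rpow_sq {t e : ℝ} (ht : 0 < t) : (t ^ e) ^ 2 = t ^ (2 * e) := by
  rw [sq, ← Real.rpow_add ht]; ring_nf

/-- Let `μ` be a Borel measure on `(0,∞)`, `ξ` measurable, `a ∈ [0,1]` and `η ∈ ℝ`.
Then for every `s ≥ 0`,
`∫ (1 − e^{−xs}) |ξ(x)| dμ ≤ s^a (∫ ξ(x)² (1+x)^η dμ)^{1/2} (∫ (1+x)^{2a−η} dμ)^{1/2}`. -/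
theorem initial_curve_holder_bound (μ : Measure ℝ) (ξ : ℝ → ℝ) (hξ : Measurable ξ)
    (a η : ℝ) (ha0 : 0 ≤ a) (ha1 : a ≤ 1) (s : ℝ) (hs : 0 ≤ s) :
    ∫⁻ x in Set.Ioi 0, ENNReal.ofReal ((1 - Real.exp (-(x * s))) * |ξ x|) ∂μ ≤
      ENNReal.ofReal (s ^ a) *
        (∫⁻ x in Set.Ioi 0, ENNReal.ofReal (ξ x ^ 2 * (1 + x) ^ η) ∂μ) ^ ((1 : ℝ) / 2) *
        (∫⁻ x in Set.Ioi 0, ENNReal.ofReal ((1 + x) ^ (2 * a - η)) ∂μ) ^ ((1 : ℝ) / 2) := by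
  set F : ℝ → ENNReal := fun x => ENNReal.ofReal (|ξ x| * (1 + x) ^ (η / 2)) with hF
  set G : ℝ → ENNReal := fun x => ENNReal.ofReal ((1 + x) ^ (a - η / 2)) with hG
  have hFmeas : AEMeasurable F (μ.restrict (Set.Ioi 0)) := by
    apply Measurable.aemeasurable; fun_prop
  have hGmeas : AEMeasurable G (μ.restrict (Set.Ioi 0)) := by
    apply Measurable.aemeasurable; fun_prop
  -- pointwise bound on Ioi 0
  have key : ∀ x ∈ Set.Ioi (0 : ℝ),
      ENNReal.ofReal ((1 - Real.exp (-(x * s))) * |ξ x|) ≤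
        ENNReal.ofReal (s ^ a) * (F x * G x) := by
    intro x hx
    have hx0 : (0 : ℝ) < x := hx
    have h1x : (0 : ℝ) < 1 + x := by linarith
    rw [hF, hG, ← ENNReal.ofReal_mul (by positivity), ← ENNReal.ofReal_mul (by positivity)]
    apply ENNReal.ofReal_le_ofReal
    have hb : 1 - Real.exp (-(x * s)) ≤ s ^ a * (1 + x) ^ a := by
      calc 1 - Real.exp (-(x * s)) ≤ (x * s) ^ a :=
            one_sub_exp_le_rpow (by positivity) ha0 ha1
        _ = x ^ a * s ^ a := Real.mul_rpow hx0.le hs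
        _ ≤ (1 + x) ^ a * s ^ a :=
            mul_le_mul_of_nonneg_right
              (Real.rpow_le_rpow hx0.le (by linarith) ha0) (by positivity)
        _ = s ^ a * (1 + x) ^ a := by ring
    calc (1 - Real.exp (-(x * s))) * |ξ x| ≤ (s ^ a * (1 + x) ^ a) * |ξ x| := by
          have h01 : 0 ≤ 1 - Real.exp (-(x * s)) := by
            have := Real.exp_le_one_iff.mpr (by nlinarith : -(x*s) ≤ 0)
            linarith
          exact mul_le_mul_of_nonneg_right hb (abs_nonneg _)
      _ = s ^ a * (|ξ x| * (1 + x) ^ (η / 2) * (1 + x) ^ (a - η / 2)) := by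
          rw [mul_assoc, mul_assoc, ← Real.rpow_add h1x]
          ring_nf
    -- done
  calc ∫⁻ x in Set.Ioi 0, ENNReal.ofReal ((1 - Real.exp (-(x * s))) * |ξ x|) ∂μ
      ≤ ∫⁻ x in Set.Ioi 0, ENNReal.ofReal (s ^ a) * (F x * G x) ∂μ := by
        refine lintegral_mono_ae ?_
        exact (ae_restrict_iff' measurableSet_Ioi).2 (Filter.Eventually.of_forall key)
    _ = ENNReal.ofReal (s ^ a) * ∫⁻ x in Set.Ioi 0, F x * G x ∂μ :=
        lintegral_const_mul' _ _ ENNReal.ofReal_ne_top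
    _ ≤ ENNReal.ofReal (s ^ a) *
          ((∫⁻ x in Set.Ioi 0, F x ^ (2 : ℝ) ∂μ) ^ ((1 : ℝ) / 2) *
           (∫⁻ x in Set.Ioi 0, G x ^ (2 : ℝ) ∂μ) ^ ((1 : ℝ) / 2)) := by
        refine mul_le_mul_of_nonneg_left ?_ (zero_le)
        exact ENNReal.lintegral_mul_le_Lp_mul_Lq _
          (Real.holderConjugate_iff_eq_conjExponent (by norm_num) |>.2 (by norm_num)) hFmeas hGmeas
    _ = ENNReal.ofReal (s ^ a) *
        (∫⁻ x in Set.Ioi 0, ENNReal.ofReal (ξ x ^ 2 * (1 + x) ^ η) ∂μ) ^ ((1 : ℝ) / 2) *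
        (∫⁻ x in Set.Ioi 0, ENNReal.ofReal ((1 + x) ^ (2 * a - η)) ∂μ) ^ ((1 : ℝ) / 2) := by
        have e1 : ∫⁻ x in Set.Ioi 0, F x ^ (2 : ℝ) ∂μ =
            ∫⁻ x in Set.Ioi 0, ENNReal.ofReal (ξ x ^ 2 * (1 + x) ^ η) ∂μ := by
          apply setLIntegral_congr_fun measurableSet_Ioi
          refine fun x hx => ?_
          have h1x : (0 : ℝ) < 1 + x := by have : (0:ℝ) < x := hx; linarith
          have hr : (|ξ x| * (1 + x) ^ (η / 2)) ^ (2 : ℕ) = ξ x ^ 2 * (1 + x) ^ η := by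
            rw [mul_pow, sq_abs, rpow_sq h1x, show 2 * (η / 2) = η by ring]
          calc F x ^ (2 : ℝ) = F x ^ (2 : ℕ) := by
                rw [← ENNReal.rpow_natCast]; norm_num
            _ = ENNReal.ofReal ((|ξ x| * (1 + x) ^ (η / 2)) ^ (2 : ℕ)) := by
                rw [hF, ← ENNReal.ofReal_pow (by positivity)]
            _ = ENNReal.ofReal (ξ x ^ 2 * (1 + x) ^ η) := by rw [hr]
        have e2 : ∫⁻ x in Set.Ioi 0, G x ^ (2 : ℝ) ∂μ =
            ∫⁻ x in Set.Ioi 0, ENNReal.ofReal ((1 + x) ^ (2 * a - η)) ∂μ := by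
          apply setLIntegral_congr_fun measurableSet_Ioi
          refine fun x hx => ?_
          have h1x : (0 : ℝ) < 1 + x := by have : (0:ℝ) < x := hx; linarith
          have hr : ((1 + x) ^ (a - η / 2)) ^ (2 : ℕ) = (1 + x) ^ (2 * a - η) := by
            rw [rpow_sq h1x, show 2 * (a - η / 2) = 2 * a - η by ring]
          calc G x ^ (2 : ℝ) = G x ^ (2 : ℕ) := by
                rw [← ENNReal.rpow_natCast]; norm_num
            _ = ENNReal.ofReal (((1 + x) ^ (a - η / 2)) ^ (2 : ℕ)) := by
                rw [hG, ← ENNReal.ofReal_pow (by positivity)]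
            _ = ENNReal.ofReal ((1 + x) ^ (2 * a - η)) := by rw [hr]
        rw [e1, e2, mul_assoc]
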